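/- Let G be a finite group and A a nontrivial normal subgroup of G. Let M(A) be the intersection of all maximal normal subgroups of A, and M_G(A) the intersection of all maximal proper G-invariant subgroups of A. Then [A, M_G(A)] ≤ M(A). -/

import Mathlib

open Subgroup Pointwise
open scoped commutatorElement

section Helpers

variable {G : Type*}

lemma mem_conjmap {G : Type*} [Group G] {B : Subgroup G} {g x : G} :
    x ∈ B.map ((MulAut.conj g).toMonoidHom) ↔ g⁻¹ * x * g ∈ B := by
  constructor
  · rintro ⟨y, hy, rfl⟩
    have : g⁻¹ * (g * y * g⁻¹) * g = y := by group
    simpa [MulAut.conj_apply, this] using hy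
  · intro h
    refine ⟨g⁻¹ * x * g, h, ?_⟩
    simp only [MulEquiv.coe_toMonoidHom, MulAut.conj_apply]
    group

lemma conj_sup_stable {G : Type*} [Group G] {X Y : Subgroup G} {a : G}
    (hX : ∀ x ∈ X, a * x * a⁻¹ ∈ X) (hY : ∀ y ∈ Y, a * y * a⁻¹ ∈ Y) :
    ∀ z ∈ X ⊔ Y, a * z * a⁻¹ ∈ X ⊔ Y := by
  intro z hz
  have h1 : (X ⊔ Y).map ((MulAut.conj a).toMonoidHom) ≤ X ⊔ Y := by
    rw [Subgroup.map_sup]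
    refine sup_le (le_trans ?_ le_sup_left) (le_trans ?_ le_sup_right)
    · rintro w ⟨x, hx, rfl⟩
      simpa [MulAut.conj_apply] using hX x hx
    · rintro w ⟨y, hy, rfl⟩
      simpa [MulAut.conj_apply] using hY y hy
  exact h1 ⟨z, hz, by simp [MulAut.conj_apply]⟩

lemma ded_le {H : Type*} [Group H] {C P N : Subgroup H} [hN : N.Normal] (hCP : C ≤ P) :
    P ⊓ (C ⊔ N) ≤ C ⊔ (P ⊓ N) := by
  rintro x ⟨hxP, hxCN⟩
  have : x ∈ (C : Set H) * (N : Set H) := by rw [← Subgroup.mul_normal]; exact hxCN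
  obtain ⟨c, hc, n, hn, rfl⟩ := this
  have hnP : n ∈ P := by
    have : c⁻¹ * (c * n) ∈ P := mul_mem (inv_mem (hCP hc)) hxP
    simpa using this
  exact mul_mem (le_sup_left (α := Subgroup H) hc)
    (le_sup_right (α := Subgroup H) (⟨hnP, hn⟩ : n ∈ P ⊓ N))

lemma finset_inf_normal {H : Type*} [Group H] {ι : Type*} [DecidableEq ι] (Nf : ι → Subgroup H)
    (hnorm : ∀ i, (Nf i).Normal) (s : Finset ι) : (s.inf Nf).Normal := by
  induction s using Finset.induction with
  | empty => constructor; intro n hn g; simp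
  | insert _ _ _ ih =>
      rw [Finset.inf_insert]
      constructor
      rintro n ⟨h1, h2⟩ g
      exact ⟨(hnorm _).conj_mem n h1 g, ih.conj_mem n h2 g⟩

lemma comm_id1 {H : Type*} [Group H] (c t n : H) :
    ⁅c, t * n⁆ = ⁅c, t⁆ * (t * ⁅c, n⁆ * t⁻¹) := by
  simp only [commutatorElement_def]; group

lemma comm_id2 {H : Type*} [Group H] (c n y : H) :
    ⁅c * n, y⁆ = (c * ⁅n, y⁆ * c⁻¹) * ⁅c, y⁆ := by
  simp only [commutatorElement_def]; group

lemma comm_mem_right {H : Type*} [Group H] {N : Subgroup H} (hN : N.Normal)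
    (x : H) {n : H} (hn : n ∈ N) : ⁅x, n⁆ ∈ N := by
  have : (x * n * x⁻¹) * n⁻¹ ∈ N := mul_mem (hN.conj_mem _ hn x) (inv_mem hn)
  simpa [commutatorElement_def, mul_assoc] using this

lemma comm_mem_left {H : Type*} [Group H] {N : Subgroup H} (hN : N.Normal)
    {n : H} (y : H) (hn : n ∈ N) : ⁅n, y⁆ ∈ N := by
  have : n * (y * n⁻¹ * y⁻¹) ∈ N := mul_mem hn (hN.conj_mem _ (inv_mem hn) y)
  simpa [commutatorElement_def, mul_assoc] using this

/-- Main abstract lemma: a normal subgroup `T` containing the intersection `K` of a finite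
family of maximal normal subgroups with nonabelian quotients, and joining with each to the
whole group, must be everything. -/
lemma main_lemma {H : Type*} [Group H] {ι : Type*} [Fintype ι] [DecidableEq ι]
    (Nf : ι → Subgroup H)
    (hnorm : ∀ i, (Nf i).Normal)
    (hmax : ∀ i, ∀ D : Subgroup H, D.Normal → Nf i ≤ D → D = Nf i ∨ D = ⊤)
    (hnab : ∀ i, ¬ ⁅(⊤ : Subgroup H), (⊤ : Subgroup H)⁆ ≤ Nf i)
    (T : Subgroup H) (hT : T.Normal)
    (hKT : Finset.univ.inf Nf ≤ T)
    (hsup : ∀ i, T ⊔ Nf i = ⊤) : T = ⊤ := by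
  classical
  set K : Subgroup H := Finset.univ.inf Nf with hK
  haveI := hT
  obtain ⟨s, hs, hmin⟩ : ∃ s : Finset ι, s.inf Nf = K ∧
      ∀ s' : Finset ι, s'.inf Nf = K → s.card ≤ s'.card := by
    obtain ⟨s, hs1, hs2⟩ := Finset.exists_min_image
      ((Finset.univ : Finset ι).powerset.filter (fun s => s.inf Nf = K)) Finset.card
      ⟨Finset.univ, by simp [hK]⟩
    refine ⟨s, (Finset.mem_filter.mp hs1).2, fun s' hs' => hs2 s' ?_⟩
    exact Finset.mem_filter.mpr ⟨Finset.mem_powerset.mpr (Finset.subset_univ _), hs'⟩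
  set C : ι → Subgroup H := fun i => (s.erase i).inf Nf with hC
  have hCnorm : ∀ i, (C i).Normal := fun i => finset_inf_normal Nf hnorm _
  have hCinf : ∀ i ∈ s, C i ⊓ Nf i = K := by
    intro i hi
    have h2 : (insert i (s.erase i)).inf Nf = s.inf Nf := by rw [Finset.insert_erase hi]
    rw [Finset.inf_insert] at h2
    rw [hC]; rw [← hs, ← h2]; exact inf_comm _ _
  have hKC : ∀ i, K ≤ C i := fun i => Finset.inf_mono (Finset.subset_univ _)
  have hCnle : ∀ i ∈ s, ¬ C i ≤ Nf i := by
    intro i hi hle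
    have h2 : (s.erase i).inf Nf = K :=
      le_antisymm (by rw [← hCinf i hi]; exact le_inf le_rfl hle) (hKC i)
    have := hmin _ h2
    have hlt : (s.erase i).card < s.card := Finset.card_erase_lt_of_mem hi
    omega
  have hCsup : ∀ i ∈ s, C i ⊔ Nf i = ⊤ := by
    intro i hi
    haveI := hCnorm i; haveI := hnorm i
    rcases hmax i (C i ⊔ Nf i) (Subgroup.sup_normal _ _) le_sup_right with h | h
    · exact absurd (le_sup_left.trans h.le) (hCnle i hi)
    · exact h
  have hCT : ∀ i ∈ s, C i ≤ T := by
    intro i hi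
    haveI := hnorm i; haveI := hCnorm i
    have hcomm : ⁅C i, (⊤ : Subgroup H)⁆ ≤ T := by
      rw [Subgroup.commutator_le]
      intro c hc x hx
      have hx' : x ∈ (T : Set H) * (Nf i : Set H) := by
        rw [← Subgroup.mul_normal, hsup i]; trivial
      obtain ⟨t, ht, n, hn, rfl⟩ := hx'
      have h1 : ⁅c, n⁆ ∈ K := by
        rw [← hCinf i hi]
        exact ⟨comm_mem_left (hCnorm i) n hc, comm_mem_right (hnorm i) c hn⟩
      rw [comm_id1]
      refine mul_mem ?_ (hT.conj_mem _ (hKT h1) t)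
      exact mul_mem (hT.conj_mem _ ht c) (inv_mem ht)
    have hperf : C i ≤ ⁅C i, C i⁆ ⊔ K := by
      haveI hKn : K.Normal := finset_inf_normal Nf hnorm _
      haveI : (⁅C i, C i⁆).Normal := Subgroup.commutator_normal _ _
      haveI hDnorm : (⁅C i, C i⁆ ⊔ K).Normal := Subgroup.sup_normal _ _
      rcases hmax i (⁅C i, C i⁆ ⊔ K ⊔ Nf i) (Subgroup.sup_normal _ _) le_sup_right with h | h
      · exfalso
        have hCCN : ⁅C i, C i⁆ ≤ Nf i := le_sup_left.trans (le_sup_left.trans h.le)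
        apply hnab i
        rw [Subgroup.commutator_le]
        intro x _ y _
        have hx : x ∈ (C i : Set H) * (Nf i : Set H) := by
          rw [← Subgroup.mul_normal, hCsup i hi]; trivial
        have hy : y ∈ (C i : Set H) * (Nf i : Set H) := by
          rw [← Subgroup.mul_normal, hCsup i hi]; trivial
        obtain ⟨c, hc, n, hn, rfl⟩ := hx
        obtain ⟨c', hc', n', hn', rfl⟩ := hy
        rw [comm_id2]
        refine mul_mem ((hnorm i).conj_mem _ ?_ c) ?_
        · exact comm_mem_left (hnorm i) _ hn
        · rw [comm_id1]
          refine mul_mem ?_ ((hnorm i).conj_mem _ (comm_mem_right (hnorm i) c hn') c')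
          exact hCCN (Subgroup.commutator_mem_commutator hc hc')
      · -- Dedekind gives `C i = ⁅C i, C i⁆ ⊔ K`
        have hDC : ⁅C i, C i⁆ ⊔ K ≤ C i := by
          refine sup_le ?_ (hKC i)
          rw [Subgroup.commutator_le]
          intro g1 h1 g2 h2
          exact mul_mem (mul_mem (mul_mem h1 h2) (inv_mem h1)) (inv_mem h2)
        intro x hx
        have hx2 : x ∈ C i ⊓ (⁅C i, C i⁆ ⊔ K ⊔ Nf i) := ⟨hx, by rw [h]; trivial⟩
        have hx3 := ded_le (N := Nf i) hDC hx2
        rw [hCinf i hi, sup_assoc, sup_idem] at hx3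
        exact hx3
    calc C i ≤ ⁅C i, C i⁆ ⊔ K := hperf
    _ ≤ T ⊔ T := sup_le_sup ((Subgroup.commutator_mono le_rfl le_top).trans hcomm) hKT
    _ = T := sup_idem T
  -- final induction
  have claim : ∀ (m : ℕ) (s'' : Finset ι), s'' ⊆ s → (s \ s'').card = m → s''.inf Nf ≤ T := by
    intro m
    induction m with
    | zero =>
        intro s'' hsub hcard
        have : s ⊆ s'' := by
          intro j hj
          by_contra hj2
          have : j ∈ s \ s'' := Finset.mem_sdiff.mpr ⟨hj, hj2⟩
          rw [Finset.card_eq_zero] at hcard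
          simp [hcard] at this
        have : s'' = s := Finset.Subset.antisymm hsub this
        rw [this, hs]; exact hKT
    | succ m ih =>
        intro s'' hsub hcard
        obtain ⟨i, hi⟩ : (s \ s'').Nonempty := by
          rw [← Finset.card_pos, hcard]; omega
        obtain ⟨his, his''⟩ := Finset.mem_sdiff.mp hi
        have hsub' : insert i s'' ⊆ s := Finset.insert_subset his hsub
        have hcard' : (s \ insert i s'').card = m := by
          rw [Finset.sdiff_insert, Finset.card_erase_of_mem hi] at *
          omega
        have ih' := ih (insert i s'') hsub' hcard'
        rw [Finset.inf_insert] at ih'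
        -- Dedekind step
        haveI := hnorm i
        have hCle : C i ≤ s''.inf Nf := by
          apply Finset.inf_mono
          intro j hj
          exact Finset.mem_erase.mpr ⟨fun hji => his'' (hji ▸ hj), hsub hj⟩
        intro x hx
        have hx2 : x ∈ s''.inf Nf ⊓ (C i ⊔ Nf i) := ⟨hx, by rw [hCsup i his]; trivial⟩
        have hx3 := ded_le (N := Nf i) hCle hx2
        have : C i ⊔ (s''.inf Nf ⊓ Nf i) ≤ T := by
          refine sup_le (hCT i his) ?_
          rw [inf_comm]
          exact le_trans (le_of_eq rfl) ih'
        exact this hx3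
  have := claim s.card ∅ (Finset.empty_subset s) (by simp)
  rw [Finset.inf_empty] at this
  exact le_antisymm le_top (le_trans (le_of_eq rfl) this)

end Helpers

/-- `B` is a `G`-invariant subgroup of `A`: a subgroup of `A` normalized by all of `G`. -/
def IsGInv (G : Type*) [Group G] (A B : Subgroup G) : Prop :=
  B ≤ A ∧ ∀ g : G, ∀ b ∈ B, g * b * g⁻¹ ∈ B

/-- `B` is a maximal proper `G`-invariant subgroup of `A`. -/
def IsMaxGInv (G : Type*) [Group G] (A B : Subgroup G) : Prop :=
  IsGInv G A B ∧ B < A ∧ ∀ C : Subgroup G, IsGInv G A C → C < A → B ≤ C → B = C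

/-- `M_G(A)`: the intersection of all maximal proper `G`-invariant subgroups of `A`. -/
def MG (G : Type*) [Group G] (A : Subgroup G) : Subgroup G :=
  sInf {B | IsMaxGInv G A B}

/-- `B` is a maximal proper normal subgroup of `A` (as subgroups of `G`). -/
def IsMaxNormalIn (G : Type*) [Group G] (A B : Subgroup G) : Prop :=
  (B ≤ A ∧ ∀ a ∈ A, ∀ b ∈ B, a * b * a⁻¹ ∈ B) ∧ B < A ∧
    ∀ C : Subgroup G, (C ≤ A ∧ ∀ a ∈ A, ∀ c ∈ C, a * c * a⁻¹ ∈ C) → C < A → B ≤ C → B = C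

/-- `M(A)`: the Mel'nikov subgroup (cosocle) of `A`, the intersection of all maximal
proper normal subgroups of `A`. -/
def Mel (G : Type*) [Group G] (A : Subgroup G) : Subgroup G :=
  sInf {B | IsMaxNormalIn G A B}

/-- For a finite group `G` and nontrivial normal subgroup `A`, `[A, M_G(A)] ≤ M(A)`. -/
theorem commutator_MG_le_Mel (G : Type*) [Group G] [Finite G] (A : Subgroup G)
    (hA : A.Normal) (hnt : A ≠ ⊥) :
    ⁅A, MG G A⁆ ≤ Mel G A := by
  classical
  haveI := hA
  haveI : Fintype G := Fintype.ofFinite G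
  haveI : Finite (Subgroup G) :=
    Finite.of_injective (fun B => (B : Set G)) SetLike.coe_injective
  -- existence of maximal G-invariant subgroups
  have exmax : ∀ B₀ : Subgroup G, IsGInv G A B₀ → B₀ < A →
      ∃ M, IsMaxGInv G A M ∧ B₀ ≤ M := by
    intro B₀ h₀ hlt
    obtain ⟨M, hMs, hMmax⟩ := Set.Finite.exists_maximalFor id
      {B | IsGInv G A B ∧ B < A ∧ B₀ ≤ B} (Set.toFinite _) ⟨B₀, h₀, hlt, le_rfl⟩
    refine ⟨M, ⟨hMs.1, hMs.2.1, ?_⟩, hMs.2.2⟩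
    intro Cc hC hClt hMC
    exact le_antisymm hMC (hMmax ⟨hC, hClt, hMs.2.2.trans hMC⟩ hMC)
  have hMG_le_A : MG G A ≤ A := by
    obtain ⟨M₀, hM₀, _⟩ := exmax ⊥ ⟨bot_le, by simp⟩ (bot_lt_iff_ne_bot.mpr hnt)
    exact le_trans (sInf_le (show M₀ ∈ {B | IsMaxGInv G A B} from hM₀)) hM₀.1.1
  have hMGnormal : (MG G A).Normal := by
    constructor
    intro n hn g
    rw [MG, Subgroup.mem_sInf] at *
    exact fun B hB => hB.1.2 g n (hn B hB)
  rw [Mel]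
  refine le_sInf ?_
  intro N hN
  obtain ⟨⟨hNA, hNnorm⟩, hNlt, hNmax⟩ := hN
  by_cases hAA : ⁅A, A⁆ ≤ N
  · exact (Subgroup.commutator_mono le_rfl hMG_le_A).trans hAA
  suffices hMN : MG G A ≤ N by
    rw [Subgroup.commutator_le]
    intro a ha m hm
    have h1 : (a * m * a⁻¹) * m⁻¹ ∈ N := mul_mem (hNnorm a ha m (hMN hm)) (inv_mem (hMN hm))
    simpa [commutatorElement_def, mul_assoc] using h1
  by_contra hMGN
  -- the conjugates of N
  set Ng : G → Subgroup G := fun g => N.map ((MulAut.conj g).toMonoidHom) with hNgdef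
  have hNg_mem : ∀ g x, x ∈ Ng g ↔ g⁻¹ * x * g ∈ N := fun g x => mem_conjmap
  have hNg1 : Ng 1 = N := by ext x; rw [hNg_mem]; simp
  have hNgA : ∀ g, Ng g ≤ A := by
    intro g x hx
    have h1 : g * (g⁻¹ * x * g) * g⁻¹ ∈ A := hA.conj_mem _ (hNA ((hNg_mem g x).mp hx)) g
    have h2 : g * (g⁻¹ * x * g) * g⁻¹ = x := by group
    rwa [h2] at h1
  have hNgnorm : ∀ g, ∀ a ∈ A, ∀ x ∈ Ng g, a * x * a⁻¹ ∈ Ng g := by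
    intro g a ha x hx
    rw [hNg_mem] at hx ⊢
    have h1 : (g⁻¹ * a * g) * (g⁻¹ * x * g) * (g⁻¹ * a * g)⁻¹ ∈ N := by
      refine hNnorm _ ?_ _ hx
      have := hA.conj_mem a ha g⁻¹
      simpa using this
    have h2 : (g⁻¹ * a * g) * (g⁻¹ * x * g) * (g⁻¹ * a * g)⁻¹ = g⁻¹ * (a * x * a⁻¹) * g := by
      group
    rwa [h2] at h1
  have hNglt : ∀ g, Ng g < A := by
    intro g
    refine lt_of_le_of_ne (hNgA g) (fun h => hNlt.ne ?_)
    refine le_antisymm hNA ?_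
    intro a ha
    have h1 : g * a * g⁻¹ ∈ A := hA.conj_mem a ha g
    have h2 : g * a * g⁻¹ ∈ Ng g := h ▸ h1
    rw [hNg_mem] at h2
    have h3 : g⁻¹ * (g * a * g⁻¹) * g = a := by group
    rwa [h3] at h2
  have hNgmax : ∀ g, IsMaxNormalIn G A (Ng g) := by
    intro g
    refine ⟨⟨hNgA g, hNgnorm g⟩, hNglt g, ?_⟩
    intro C ⟨hCA, hCn⟩ hClt hle
    set C' : Subgroup G := C.map ((MulAut.conj g⁻¹).toMonoidHom) with hC'def
    have hC'mem : ∀ x, x ∈ C' ↔ g * x * g⁻¹ ∈ C := by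
      intro x; rw [mem_conjmap]; simp
    have hC'A : C' ≤ A := by
      intro x hx
      rw [hC'mem] at hx
      have h1 := hA.conj_mem _ (hCA hx) g⁻¹
      have h2 : g⁻¹ * (g * x * g⁻¹) * g⁻¹⁻¹ = x := by group
      rwa [h2] at h1
    have hC'n : ∀ a ∈ A, ∀ c ∈ C', a * c * a⁻¹ ∈ C' := by
      intro a ha c hc
      rw [hC'mem] at hc ⊢
      have h1 : (g * a * g⁻¹) * (g * c * g⁻¹) * (g * a * g⁻¹)⁻¹ ∈ C :=
        hCn _ (by simpa using hA.conj_mem a ha g) _ hc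
      have h2 : (g * a * g⁻¹) * (g * c * g⁻¹) * (g * a * g⁻¹)⁻¹ = g * (a * c * a⁻¹) * g⁻¹ := by
        group
      rwa [h2] at h1
    have hC'lt : C' < A := by
      refine lt_of_le_of_ne hC'A (fun h => hClt.ne ?_)
      refine le_antisymm hCA ?_
      intro a ha
      have h1 : g⁻¹ * a * g ∈ A := by simpa using hA.conj_mem a ha g⁻¹
      have h2 : g⁻¹ * a * g ∈ C' := h ▸ h1
      rw [hC'mem] at h2
      have h3 : g * (g⁻¹ * a * g) * g⁻¹ = a := by group
      rwa [h3] at h2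
    have hNC' : N ≤ C' := by
      intro n hn
      rw [hC'mem]
      refine hle ?_
      rw [hNg_mem]
      have h3 : g⁻¹ * (g * n * g⁻¹) * g = n := by group
      rwa [h3]
    have hNeq : N = C' := hNmax C' ⟨hC'A, hC'n⟩ hC'lt hNC'
    ext x
    rw [hNg_mem, hNeq, hC'mem]
    constructor
    · intro h
      have h3 : g * (g⁻¹ * x * g) * g⁻¹ = x := by group
      rwa [h3] at h
    · intro h
      have h3 : g * (g⁻¹ * x * g) * g⁻¹ = x := by group
      rwa [h3]
  -- intersection of the conjugates
  set K : Subgroup G := ⨅ g : G, Ng g with hKdef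
  have hK_mem : ∀ x, x ∈ K ↔ ∀ g, x ∈ Ng g := by
    intro x; rw [hKdef]; exact Subgroup.mem_iInf
  have hKN : K ≤ N := fun x hx => hNg1 ▸ ((hK_mem x).mp hx 1)
  have hKA : K ≤ A := hKN.trans hNA
  have hKGInv : IsGInv G A K := by
    refine ⟨hKA, ?_⟩
    intro h b hb
    rw [hK_mem] at hb ⊢
    intro g
    rw [hNg_mem]
    have h1 := (hNg_mem (h⁻¹ * g) b).mp (hb (h⁻¹ * g))
    have h2 : (h⁻¹ * g)⁻¹ * b * (h⁻¹ * g) = g⁻¹ * (h * b * h⁻¹) * g := by group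
    rwa [h2] at h1
  have hKnormal : K.Normal := ⟨fun b hb g => hKGInv.2 g b hb⟩
  have hKlt : K < A := lt_of_le_of_lt hKN hNlt
  obtain ⟨M, hM, hKM⟩ := exmax K hKGInv hKlt
  have hMGM : MG G A ≤ M := sInf_le (show M ∈ {B | IsMaxGInv G A B} from hM)
  set T : Subgroup G := MG G A ⊔ K with hTdef
  have hTA : T ≤ A := sup_le hMG_le_A hKA
  haveI hTnormal : T.Normal := by
    constructor
    intro n hn g
    exact conj_sup_stable (fun x hx => hMGnormal.conj_mem x hx g)
      (fun y hy => hKnormal.conj_mem y hy g) n hn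
  have hTM : T ≤ M := sup_le hMGM hKM
  have hMGnleNg : ∀ g, ¬ MG G A ≤ Ng g := by
    intro g hle
    apply hMGN
    intro b hb
    have h1 : g * b * g⁻¹ ∈ Ng g := hle (hMGnormal.conj_mem b hb g)
    rw [hNg_mem] at h1
    have h2 : g⁻¹ * (g * b * g⁻¹) * g = b := by group
    rwa [h2] at h1
  have hTsup : ∀ g, T ⊔ Ng g = A := by
    intro g
    have hXA : T ⊔ Ng g ≤ A := sup_le hTA (hNgA g)
    have hXn : ∀ a ∈ A, ∀ x ∈ T ⊔ Ng g, a * x * a⁻¹ ∈ T ⊔ Ng g := by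
      intro a ha x hx
      exact conj_sup_stable (fun t ht => hTnormal.conj_mem t ht a)
        (fun y hy => hNgnorm g a ha y hy) x hx
    rcases lt_or_eq_of_le hXA with h | h
    · exfalso
      have := (hNgmax g).2.2 (T ⊔ Ng g) ⟨hXA, fun a ha x hx => hXn a ha x hx⟩ h le_sup_right
      exact hMGnleNg g (le_trans le_sup_left (le_trans le_sup_left this.ge))
    · exact h
  -- transfer to the group ↥A and apply the main lemma
  have hmain := main_lemma (H := ↥A) (ι := G) (fun g => (Ng g).subgroupOf A)
    ?_ ?_ ?_ (T.subgroupOf A) ?_ ?_ ?_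
  · -- derive the contradiction
    have hAT : A ≤ T := by
      intro a ha
      have h1 : (⟨a, ha⟩ : ↥A) ∈ T.subgroupOf A := by rw [hmain]; trivial
      exact Subgroup.mem_subgroupOf.mp h1
    exact absurd (lt_of_le_of_lt (hAT.trans hTM) hM.2.1) (lt_irrefl A)
  · -- normality of each (Ng g).subgroupOf A
    intro g
    constructor
    intro n hn a
    rw [Subgroup.mem_subgroupOf] at hn ⊢
    have := hNgnorm g (↑a) a.2 (↑n) hn
    simpa using this
  · -- maximality
    intro g D hDnorm hle
    set D' : Subgroup G := D.map A.subtype with hD'def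
    have hD'mem : ∀ x : G, x ∈ D' ↔ ∃ h : x ∈ A, (⟨x, h⟩ : ↥A) ∈ D := by
      intro x
      constructor
      · rintro ⟨d, hd, rfl⟩
        exact ⟨d.2, by simpa using hd⟩
      · rintro ⟨h, hd⟩
        exact ⟨⟨x, h⟩, hd, rfl⟩
    have hD'A : D' ≤ A := Subgroup.map_subtype_le D
    have hD'norm : ∀ a ∈ A, ∀ d ∈ D', a * d * a⁻¹ ∈ D' := by
      intro a ha d hd
      rw [hD'mem] at hd
      obtain ⟨hdA, hd⟩ := hd
      have h1 := hDnorm.conj_mem _ hd ⟨a, ha⟩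
      refine (hD'mem _).mpr ⟨hA.conj_mem d hdA a, ?_⟩
      exact h1
    have hND' : Ng g ≤ D' := by
      intro x hx
      exact (hD'mem x).mpr ⟨hNgA g hx, hle (Subgroup.mem_subgroupOf.mpr hx)⟩
    by_cases hD'eq : D' = A
    · right
      rw [eq_top_iff]
      intro a _
      have h1 : (↑a : G) ∈ D' := by rw [hD'eq]; exact a.2
      rw [hD'mem] at h1
      obtain ⟨h2, h3⟩ := h1
      exact h3
    · left
      have hNgD' : Ng g = D' := (hNgmax g).2.2 D' ⟨hD'A, hD'norm⟩
        (lt_of_le_of_ne hD'A hD'eq) hND'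
      ext x
      rw [Subgroup.mem_subgroupOf, hNgD', hD'mem]
      constructor
      · intro h; exact ⟨x.2, by simpa using h⟩
      · rintro ⟨h1, h2⟩; exact h2
  · -- nonabelian quotients
    intro g hle
    have hAAg : ⁅A, A⁆ ≤ Ng g := by
      rw [Subgroup.commutator_le]
      intro x hx y hy
      have h1 : ⁅(⟨x, hx⟩ : ↥A), (⟨y, hy⟩ : ↥A)⁆ ∈ (Ng g).subgroupOf A :=
        hle (Subgroup.commutator_mem_commutator (mem_top _) (mem_top _))
      rw [Subgroup.mem_subgroupOf] at h1
      have h2 : ((⁅(⟨x, hx⟩ : ↥A), (⟨y, hy⟩ : ↥A)⁆ : ↥A) : G) = ⁅x, y⁆ := by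
        simp [commutatorElement_def]
      rwa [h2] at h1
    apply hAA
    haveI : (⁅A, A⁆).Normal := Subgroup.commutator_normal A A
    intro x hx
    have h1 : g * x * g⁻¹ ∈ Ng g := hAAg (this.conj_mem x hx g)
    rw [hNg_mem] at h1
    have h2 : g⁻¹ * (g * x * g⁻¹) * g = x := by group
    rwa [h2] at h1
  · -- T.subgroupOf A normal
    constructor
    intro n hn a
    rw [Subgroup.mem_subgroupOf] at hn ⊢
    have := hTnormal.conj_mem (↑n) hn (↑a)
    simpa using this
  · -- inf ≤ T
    intro x hx
    rw [Subgroup.mem_subgroupOf]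
    have h1 : ∀ g : G, x ∈ (Ng g).subgroupOf A := by
      intro g
      exact Finset.inf_le (f := fun g => (Ng g).subgroupOf A) (Finset.mem_univ g) hx
    have h2 : (↑x : G) ∈ K := by
      rw [hK_mem]
      exact fun g => Subgroup.mem_subgroupOf.mp (h1 g)
    exact le_sup_right (α := Subgroup G) h2
  · -- joins are everything
    intro g
    rw [← Subgroup.subgroupOf_sup hTA (hNgA g), hTsup g, Subgroup.subgroupOf_self]
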